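/- Let X be a compact metric space, q > 1, p ≥ 1, and consider the half-cylinder X ×_q [0,∞) with metric d_q((x₁,t₁),(x₂,t₂)) = (d(x₁,x₂)^q + |t₁-t₂|^q)^(1/q). For μ ∈ P_p(X ×_q [0,∞)) let (T₀)_#μ be the pushforward of μ under projection to the base (x,t) ↦ (x,0). Then for every measure ν' supported on X × {0}, one has W_p(μ, ν') ≥ W_p(μ, (T₀)_#μ), with equality only if ν' = (T₀)_#μ. -/

import Mathlib

open MeasureTheory
open scoped NNReal

/-- The `q`-product distance on `X × Y`. -/
noncomputable def dq {X Y : Type*} [MetricSpace X] [MetricSpace Y] (q : ℝ) (a b : X × Y) : ℝ :=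
  (dist a.1 b.1 ^ q + dist a.2 b.2 ^ q) ^ (1 / q)

/-- The `p`-Wasserstein distance associated to a cost (distance) function `d`. -/
noncomputable def Wp {Z : Type*} [MeasurableSpace Z] (d : Z → Z → ℝ) (p : ℝ)
    (μ ν : Measure Z) : ℝ :=
  sInf {c : ℝ | ∃ γ : Measure (Z × Z), IsProbabilityMeasure γ ∧
    γ.map Prod.fst = μ ∧ γ.map Prod.snd = ν ∧
    c = (∫ z, d z.1 z.2 ^ p ∂γ) ^ (1 / p)}


set_option linter.unusedVariables false
set_option linter.unusedSectionVars false
set_option maxHeartbeats 1000000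

section Real
variable {q p : ℝ}

lemma aux12_rpow_cancel (hq : 0 < q) {t : ℝ} (ht : 0 ≤ t) : (t ^ q) ^ (1/q) = t := by
  rw [← Real.rpow_mul ht, mul_one_div, div_self hq.ne', Real.rpow_one]

lemma aux12_pq_cancel (hq : 0 < q) {t : ℝ} (ht : 0 ≤ t) : (t ^ q) ^ (p/q) = t ^ p := by
  rw [← Real.rpow_mul ht]
  congr 1
  field_simp

lemma aux12_h_nonneg (hq : 0 < q) (hp : 0 < p) {a t : ℝ} (ha : 0 ≤ a) (ht : 0 ≤ t) :
    t ^ p ≤ (a ^ q + t ^ q) ^ (p/q) := by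
  rw [← aux12_pq_cancel hq ht]
  exact Real.rpow_le_rpow (Real.rpow_nonneg ht q)
    (le_add_of_nonneg_left (Real.rpow_nonneg ha q)) (by positivity)

lemma aux12_h_pos (hq : 0 < q) (hp : 0 < p) {a t : ℝ} (ha : 0 < a) (ht : 0 ≤ t) :
    t ^ p < (a ^ q + t ^ q) ^ (p/q) := by
  rw [← aux12_pq_cancel hq ht]
  exact Real.rpow_lt_rpow (Real.rpow_nonneg ht q)
    (lt_add_of_pos_left _ (Real.rpow_pos_of_pos ha q)) (by positivity)

lemma aux12_h_mono (hq : 0 < q) (hp : 0 < p) {a b t : ℝ} (ha : 0 ≤ a) (hab : a ≤ b) (ht : 0 ≤ t) :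
    (a ^ q + t ^ q) ^ (p/q) ≤ (b ^ q + t ^ q) ^ (p/q) := by
  apply Real.rpow_le_rpow (by positivity) _ (by positivity)
  exact add_le_add_left (Real.rpow_le_rpow ha hab hq.le) _

lemma aux12_dom (hq : 0 < q) (hp : 0 < p) {D t : ℝ} (hD : 0 ≤ D) (ht : 0 ≤ t) :
    (D ^ q + t ^ q) ^ (p/q) ≤ 2 ^ (p/q) * D ^ p + 2 ^ (p/q) * t ^ p := by
  have hm : 0 ≤ max D t := le_max_of_le_left hD
  have h1 : D ^ q + t ^ q ≤ 2 * max D t ^ q := by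
    have := Real.rpow_le_rpow hD (le_max_left D t) hq.le
    have := Real.rpow_le_rpow ht (le_max_right D t) hq.le
    nlinarith [Real.rpow_nonneg hm q]
  calc (D ^ q + t ^ q) ^ (p/q) ≤ (2 * max D t ^ q) ^ (p/q) :=
        Real.rpow_le_rpow (by positivity) h1 (by positivity)
    _ = 2 ^ (p/q) * (max D t) ^ p := by
        rw [Real.mul_rpow (by norm_num) (Real.rpow_nonneg hm q), aux12_pq_cancel hq hm]
    _ ≤ 2 ^ (p/q) * D ^ p + 2 ^ (p/q) * t ^ p := by
        rcases max_cases D t with ⟨h, _⟩ | ⟨h, _⟩ <;> rw [h] <;>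
          nlinarith [Real.rpow_nonneg hD p, Real.rpow_nonneg ht p,
            Real.rpow_nonneg (le_trans hD (le_max_left D t)) (p/q),
            Real.rpow_pos_of_pos (zero_lt_two (α := ℝ)) (p/q)]
end Real

section Dq
variable {X : Type*} [MetricSpace X] {q p : ℝ}

lemma aux12_dq_nonneg (a b : X × ℝ≥0) : 0 ≤ dq q a b := Real.rpow_nonneg (by positivity) _

lemma aux12_cost_eq (hq : 0 < q) (a b : X × ℝ≥0) :
    dq q a b ^ p = (dist a.1 b.1 ^ q + dist a.2 b.2 ^ q) ^ (p/q) := by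
  rw [dq, ← Real.rpow_mul (by positivity), one_div, inv_mul_eq_div]

lemma aux12_snd_le_dq (hq : 0 < q) (a b : X × ℝ≥0) : dist a.2 b.2 ≤ dq q a b := by
  rw [dq]
  calc dist a.2 b.2 = (dist a.2 b.2 ^ q) ^ (1/q) := (aux12_rpow_cancel hq dist_nonneg).symm
    _ ≤ _ := Real.rpow_le_rpow (by positivity)
        (le_add_of_nonneg_left (by positivity)) (by positivity)

lemma aux12_dq_self_base (hq : 0 < q) (a : X × ℝ≥0) :
    dq q a (a.1, 0) = (a.2 : ℝ) := by
  have h2 : dist a.2 (0 : ℝ≥0) = (a.2 : ℝ) := by simp [NNReal.dist_eq]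
  rw [dq]
  simp only [dist_self, h2]
  rw [Real.zero_rpow hq.ne', zero_add, aux12_rpow_cancel hq a.2.coe_nonneg]

lemma aux12_dq_base (hq : 0 < q) (a b : X × ℝ≥0) (h : a.2 = b.2) :
    dq q a b = dist a.1 b.1 := by
  rw [dq, h]
  simp only [dist_self]
  rw [Real.zero_rpow hq.ne', add_zero, aux12_rpow_cancel hq dist_nonneg]
end Dq

set_option linter.unusedSectionVars false

section M
variable {X : Type*} [MetricSpace X] [CompactSpace X] [MeasurableSpace X] [BorelSpace X]
  {q p : ℝ}

lemma aux12_cont_cost (hq : 0 < q) (hp : 0 < p) :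
    Continuous (fun ω : (X × ℝ≥0) × (X × ℝ≥0) => dq q ω.1 ω.2 ^ p) := by
  have c1 : Continuous (fun ω : (X × ℝ≥0) × (X × ℝ≥0) =>
      dist ω.1.1 ω.2.1 ^ q + dist ω.1.2 ω.2.2 ^ q) := by
    apply Continuous.add
    · exact (Continuous.dist (continuous_fst.fst) (continuous_snd.fst)).rpow_const
        (fun x => Or.inr hq.le)
    · exact (Continuous.dist (continuous_fst.snd) (continuous_snd.snd)).rpow_const
        (fun x => Or.inr hq.le)
  exact (c1.rpow_const (fun x => Or.inr (by positivity))).rpow_const (fun x => Or.inr hp.le)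

lemma aux12_cont_t (hp : 0 ≤ p) :
    Continuous (fun z : X × ℝ≥0 => (z.2 : ℝ) ^ p) :=
  (NNReal.continuous_coe.comp (continuous_snd : Continuous fun z : X × ℝ≥0 => z.2)).rpow_const
    (fun _ => Or.inr hp)

lemma aux12_meas_T : Measurable (fun z : X × ℝ≥0 => (z.1, (0:ℝ≥0))) :=
  measurable_fst.prodMk measurable_const

lemma aux12_meas_base : MeasurableSet {z : X × ℝ≥0 | z.2 ≠ 0} :=
  ((measurableSet_singleton (0:ℝ≥0)).compl).preimage measurable_snd

lemma aux12_ae_snd_zero {γ : Measure ((X × ℝ≥0) × (X × ℝ≥0))} {ν : Measure (X × ℝ≥0)}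
    (hsnd : γ.map Prod.snd = ν) (hν : ν {z : X × ℝ≥0 | z.2 ≠ 0} = 0) :
    ∀ᵐ ω ∂γ, ω.2.2 = 0 := by
  rw [ae_iff]
  have : γ (Prod.snd ⁻¹' {z : X × ℝ≥0 | z.2 ≠ 0}) = 0 := by
    rw [← Measure.map_apply measurable_snd aux12_meas_base, hsnd]; exact hν
  simpa using this

lemma aux12_integrable_t1p (hp : 0 ≤ p) {μ : Measure (X × ℝ≥0)}
    {γ : Measure ((X × ℝ≥0) × (X × ℝ≥0))}
    (hmom : Integrable (fun z : X × ℝ≥0 => (z.2 : ℝ) ^ p) μ)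
    (hfst : γ.map Prod.fst = μ) :
    Integrable (fun ω : (X × ℝ≥0) × (X × ℝ≥0) => (ω.1.2 : ℝ) ^ p) γ := by
  rw [← hfst] at hmom
  exact (integrable_map_measure (aux12_cont_t hp).aestronglyMeasurable
    measurable_fst.aemeasurable).mp hmom

lemma aux12_integral_t1p (hp : 0 ≤ p) {μ : Measure (X × ℝ≥0)}
    {γ : Measure ((X × ℝ≥0) × (X × ℝ≥0))}
    (hfst : γ.map Prod.fst = μ) :
    ∫ ω, (ω.1.2 : ℝ) ^ p ∂γ = ∫ z, (z.2 : ℝ) ^ p ∂μ := by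
  rw [← hfst]
  exact (integral_map measurable_fst.aemeasurable (aux12_cont_t hp).aestronglyMeasurable).symm
end M
section C
variable {X : Type*} [MetricSpace X] [CompactSpace X] [MeasurableSpace X] [BorelSpace X]
  {q p : ℝ}

lemma aux12_integrable_cost (hq : 0 < q) (hp : 0 < p) {μ ν : Measure (X × ℝ≥0)}
    {γ : Measure ((X × ℝ≥0) × (X × ℝ≥0))} [IsProbabilityMeasure γ]
    (hmom : Integrable (fun z : X × ℝ≥0 => (z.2 : ℝ) ^ p) μ)
    (hfst : γ.map Prod.fst = μ) (hsnd : γ.map Prod.snd = ν)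
    (hν : ν {z : X × ℝ≥0 | z.2 ≠ 0} = 0) :
    Integrable (fun ω : (X × ℝ≥0) × (X × ℝ≥0) => dq q ω.1 ω.2 ^ p) γ := by
  set D : ℝ := Metric.diam (Set.univ : Set X) with hD
  have hD0 : 0 ≤ D := Metric.diam_nonneg
  apply Integrable.mono'
    ((integrable_const (2 ^ (p/q) * D ^ p)).add
      ((aux12_integrable_t1p hp.le hmom hfst).const_mul (2 ^ (p/q))))
    (aux12_cont_cost hq hp).aestronglyMeasurable
  filter_upwards [aux12_ae_snd_zero hsnd hν] with ω hω
  rw [Real.norm_eq_abs, abs_of_nonneg (Real.rpow_nonneg (aux12_dq_nonneg _ _) _),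
    aux12_cost_eq hq]
  have h2 : dist ω.1.2 ω.2.2 = (ω.1.2 : ℝ) := by rw [hω]; simp [NNReal.dist_eq]
  rw [h2]
  calc (dist ω.1.1 ω.2.1 ^ q + (ω.1.2:ℝ) ^ q) ^ (p/q)
        ≤ (D ^ q + (ω.1.2:ℝ) ^ q) ^ (p/q) :=
          aux12_h_mono hq hp dist_nonneg
            (Metric.dist_le_diam_of_mem isCompact_univ.isBounded (Set.mem_univ _)
              (Set.mem_univ _)) ω.1.2.coe_nonneg
      _ ≤ 2 ^ (p/q) * D ^ p + 2 ^ (p/q) * (ω.1.2:ℝ) ^ p := aux12_dom hq hp hD0 ω.1.2.coe_nonneg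

lemma aux12_cost_ge (hq : 0 < q) (hp : 0 < p) {μ ν : Measure (X × ℝ≥0)}
    {γ : Measure ((X × ℝ≥0) × (X × ℝ≥0))} [IsProbabilityMeasure γ]
    (hmom : Integrable (fun z : X × ℝ≥0 => (z.2 : ℝ) ^ p) μ)
    (hfst : γ.map Prod.fst = μ) (hsnd : γ.map Prod.snd = ν)
    (hν : ν {z : X × ℝ≥0 | z.2 ≠ 0} = 0) :
    ∫ z, (z.2 : ℝ) ^ p ∂μ ≤ ∫ ω, dq q ω.1 ω.2 ^ p ∂γ := by
  rw [← aux12_integral_t1p hp.le hfst]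
  apply integral_mono_ae (aux12_integrable_t1p hp.le hmom hfst)
    (aux12_integrable_cost hq hp hmom hfst hsnd hν)
  filter_upwards [aux12_ae_snd_zero hsnd hν] with ω hω
  have h1 : (ω.1.2 : ℝ) ≤ dq q ω.1 ω.2 := by
    have := aux12_snd_le_dq hq ω.1 ω.2
    rwa [hω, NNReal.dist_eq, NNReal.coe_zero, sub_zero,
      abs_of_nonneg ω.1.2.coe_nonneg] at this
  exact Real.rpow_le_rpow ω.1.2.coe_nonneg h1 hp.le
end C

section D
variable {X : Type*} [MetricSpace X] [CompactSpace X] [MeasurableSpace X] [BorelSpace X]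
  {q p : ℝ}

lemma aux12_bddBelow (μ ν : Measure (X × ℝ≥0)) :
    BddBelow {c : ℝ | ∃ γ : Measure ((X × ℝ≥0) × (X × ℝ≥0)), IsProbabilityMeasure γ ∧
      γ.map Prod.fst = μ ∧ γ.map Prod.snd = ν ∧
      c = (∫ z, dq q z.1 z.2 ^ p ∂γ) ^ (1 / p)} := by
  refine ⟨0, fun c hc => ?_⟩
  obtain ⟨γ, _, _, _, rfl⟩ := hc
  exact Real.rpow_nonneg
    (integral_nonneg fun ω => Real.rpow_nonneg (aux12_dq_nonneg _ _) p) _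

lemma aux12_nonempty (d : (X × ℝ≥0) → (X × ℝ≥0) → ℝ) (μ ν : Measure (X × ℝ≥0))
    [IsProbabilityMeasure μ] [IsProbabilityMeasure ν] :
    Set.Nonempty {c : ℝ | ∃ γ : Measure ((X × ℝ≥0) × (X × ℝ≥0)), IsProbabilityMeasure γ ∧
      γ.map Prod.fst = μ ∧ γ.map Prod.snd = ν ∧
      c = (∫ z, d z.1 z.2 ^ p ∂γ) ^ (1 / p)} := by
  refine ⟨_, μ.prod ν, inferInstance, ?_, ?_, rfl⟩
  · rw [Measure.map_fst_prod, measure_univ, one_smul]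
  · rw [Measure.map_snd_prod, measure_univ, one_smul]

lemma aux12_base_supported (μ : Measure (X × ℝ≥0)) :
    (μ.map (fun z : X × ℝ≥0 => (z.1, (0:ℝ≥0)))) {z : X × ℝ≥0 | z.2 ≠ 0} = 0 := by
  rw [Measure.map_apply aux12_meas_T aux12_meas_base]
  have h : (fun z : X × ℝ≥0 => (z.1, (0:ℝ≥0))) ⁻¹' {z : X × ℝ≥0 | z.2 ≠ 0} = ∅ := by
    ext z; simp
  rw [h]
  exact measure_empty

lemma aux12_Wp_le (hq : 0 < q) (hp : 0 < p) (μ : Measure (X × ℝ≥0)) [IsProbabilityMeasure μ]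
    (hmom : Integrable (fun z : X × ℝ≥0 => (z.2 : ℝ) ^ p) μ) :
    Wp (dq q) p μ (μ.map (fun z : X × ℝ≥0 => (z.1, (0:ℝ≥0)))) ≤
      (∫ z, (z.2 : ℝ) ^ p ∂μ) ^ (1/p) := by
  apply csInf_le (aux12_bddBelow _ _)
  set e : (X × ℝ≥0) → (X × ℝ≥0) × (X × ℝ≥0) := fun z => (z, (z.1, 0)) with he
  have hme : Measurable e := measurable_id.prodMk aux12_meas_T
  refine ⟨μ.map e, Measure.isProbabilityMeasure_map hme.aemeasurable, ?_, ?_, ?_⟩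
  · rw [Measure.map_map measurable_fst hme]
    simp [Function.comp_def, he, Measure.map_id]
  · rw [Measure.map_map measurable_snd hme]
    rfl
  · congr 1
    rw [integral_map hme.aemeasurable (aux12_cont_cost hq hp).aestronglyMeasurable]
    apply integral_congr_ae
    filter_upwards with z
    rw [aux12_dq_self_base hq]

lemma aux12_Wp_eq (hq : 0 < q) (hp : 0 < p) (μ : Measure (X × ℝ≥0)) [IsProbabilityMeasure μ]
    (hmom : Integrable (fun z : X × ℝ≥0 => (z.2 : ℝ) ^ p) μ) :
    Wp (dq q) p μ (μ.map (fun z : X × ℝ≥0 => (z.1, (0:ℝ≥0)))) =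
      (∫ z, (z.2 : ℝ) ^ p ∂μ) ^ (1/p) := by
  haveI : IsProbabilityMeasure (μ.map (fun z : X × ℝ≥0 => (z.1, (0:ℝ≥0)))) :=
    Measure.isProbabilityMeasure_map aux12_meas_T.aemeasurable
  refine le_antisymm (aux12_Wp_le hq hp μ hmom) ?_
  apply le_csInf (aux12_nonempty _ _ _)
  rintro c ⟨γ, hγ, hfst, hsnd, rfl⟩
  exact Real.rpow_le_rpow (integral_nonneg fun z => Real.rpow_nonneg z.2.coe_nonneg p)
    (aux12_cost_ge hq hp hmom hfst hsnd (aux12_base_supported μ)) (by positivity)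

lemma aux12_Wp_ge_of_base (hq : 0 < q) (hp : 0 < p) (μ ν : Measure (X × ℝ≥0))
    [IsProbabilityMeasure μ] [IsProbabilityMeasure ν]
    (hmom : Integrable (fun z : X × ℝ≥0 => (z.2 : ℝ) ^ p) μ)
    (hν : ν {z : X × ℝ≥0 | z.2 ≠ 0} = 0) :
    (∫ z, (z.2 : ℝ) ^ p ∂μ) ^ (1/p) ≤ Wp (dq q) p μ ν := by
  apply le_csInf (aux12_nonempty _ _ _)
  rintro c ⟨γ, hγ, hfst, hsnd, rfl⟩
  exact Real.rpow_le_rpow (integral_nonneg fun z => Real.rpow_nonneg z.2.coe_nonneg p)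
    (aux12_cost_ge hq hp hmom hfst hsnd hν) (by positivity)
end D
section E
variable {X : Type*} [MetricSpace X] [CompactSpace X] [MeasurableSpace X] [BorelSpace X]
  {q p : ℝ}

lemma aux12_exists_coupling (hq : 0 < q) (hp : 0 < p) (μ ν : Measure (X × ℝ≥0))
    [IsProbabilityMeasure μ] [IsProbabilityMeasure ν]
    (heq : Wp (dq q) p μ ν = (∫ z, (z.2 : ℝ) ^ p ∂μ) ^ (1/p))
    {ε : ℝ} (hε : 0 < ε) :
    ∃ γ : Measure ((X × ℝ≥0) × (X × ℝ≥0)), IsProbabilityMeasure γ ∧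
      γ.map Prod.fst = μ ∧ γ.map Prod.snd = ν ∧
      ∫ ω, dq q ω.1 ω.2 ^ p ∂γ < (∫ z, (z.2 : ℝ) ^ p ∂μ) + ε := by
  set I : ℝ := ∫ z, (z.2 : ℝ) ^ p ∂μ with hI
  have hI0 : 0 ≤ I := integral_nonneg fun z => Real.rpow_nonneg z.2.coe_nonneg p
  -- find e > 0 with (I^(1/p) + e)^p < I + ε
  have hφ : ContinuousAt (fun e : ℝ => (I ^ (1/p) + e) ^ p) 0 := by
    apply ContinuousAt.rpow_const (by fun_prop)
    right; exact hp.le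
  have hφ0 : (I ^ (1/p) + (0:ℝ)) ^ p = I := by
    rw [add_zero, ← Real.rpow_mul hI0, one_div_mul_cancel hp.ne', Real.rpow_one]
  have h1 : ∀ᶠ e in nhds (0:ℝ), (I ^ (1/p) + e) ^ p < I + ε := by
    apply hφ.eventually_lt_const
    show (I ^ (1/p) + 0) ^ p < I + ε
    rw [hφ0]; linarith
  have h2 : ∀ᶠ e in nhdsWithin (0:ℝ) (Set.Ioi 0), (I ^ (1/p) + e) ^ p < I + ε ∧ 0 < e :=
    (h1.filter_mono nhdsWithin_le_nhds).and self_mem_nhdsWithin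
  obtain ⟨e, he, he0⟩ := h2.exists
  have hlt : Wp (dq q) p μ ν < I ^ (1/p) + e := by rw [heq]; linarith
  obtain ⟨c, hcS, hclt⟩ := exists_lt_of_csInf_lt (aux12_nonempty (dq q) μ ν) hlt
  obtain ⟨γ, hγ, hfst, hsnd, rfl⟩ := hcS
  refine ⟨γ, hγ, hfst, hsnd, ?_⟩
  have hc0 : (0:ℝ) ≤ ∫ ω, dq q ω.1 ω.2 ^ p ∂γ :=
    integral_nonneg fun ω => Real.rpow_nonneg (aux12_dq_nonneg _ _) p
  have : ((∫ ω, dq q ω.1 ω.2 ^ p ∂γ) ^ (1/p)) ^ p < (I ^ (1/p) + e) ^ p :=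
    Real.rpow_lt_rpow (Real.rpow_nonneg hc0 _) hclt hp
  rw [← Real.rpow_mul hc0, one_div_mul_cancel hp.ne', Real.rpow_one] at this
  exact this.trans he
end E
section F
variable {X : Type*} [MetricSpace X] [CompactSpace X] [MeasurableSpace X] [BorelSpace X]
  {q p : ℝ}

lemma aux12_key (hq : 1 < q) (hp : 1 ≤ p) (μ ν : Measure (X × ℝ≥0))
    [IsProbabilityMeasure μ] [IsProbabilityMeasure ν]
    (hmom : Integrable (fun z : X × ℝ≥0 => (z.2 : ℝ) ^ p) μ)
    (hν : ν {z : X × ℝ≥0 | z.2 ≠ 0} = 0)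
    (heq : Wp (dq q) p μ ν = (∫ z, (z.2 : ℝ) ^ p ∂μ) ^ (1/p))
    (L : ℝ≥0) (g : X × ℝ≥0 → ℝ) (hg : LipschitzWith L g)
    (hg01 : ∀ z, g z ∈ Set.Icc (0:ℝ) 1) :
    ∫ z, g z ∂ν = ∫ z, g z ∂(μ.map (fun z : X × ℝ≥0 => (z.1, (0:ℝ≥0)))) := by
  have hq0 : 0 < q := lt_trans zero_lt_one hq
  have hp0 : 0 < p := lt_of_lt_of_le zero_lt_one hp
  haveI : IsProbabilityMeasure (μ.map (fun z : X × ℝ≥0 => (z.1, (0:ℝ≥0)))) :=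
    Measure.isProbabilityMeasure_map aux12_meas_T.aemeasurable
  set ν₀ : Measure (X × ℝ≥0) := μ.map (fun z : X × ℝ≥0 => (z.1, (0:ℝ≥0))) with hν₀
  set I : ℝ := ∫ z, (z.2 : ℝ) ^ p ∂μ with hIdef
  have hI0 : 0 ≤ I := integral_nonneg fun z => Real.rpow_nonneg z.2.coe_nonneg p
  -- reduce to : ∀ θ > 0, |∫ g ∂ν - ∫ g ∂ν₀| ≤ θ
  suffices H : ∀ θ : ℝ, 0 < θ → |∫ z, g z ∂ν - ∫ z, g z ∂ν₀| ≤ θ by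
    have h0 : |∫ z, g z ∂ν - ∫ z, g z ∂ν₀| ≤ 0 :=
      le_of_forall_pos_le_add fun ε hε => by simpa using H ε hε
    have := abs_nonpos_iff.mp h0
    linarith [sub_eq_zero.mp this]
  intro θ hθ
  -- parameters
  set δ : ℝ := θ / (3 * ((L:ℝ) + 1)) with hδdef
  have hL0 : (0:ℝ) ≤ L := L.coe_nonneg
  have hδ0 : 0 < δ := by positivity
  set K0 : ℝ := 3 * (I + 1) / θ with hK0def
  have hK0 : 0 < K0 := by positivity
  set M : ℝ := max 1 (K0 ^ (1/p)) with hMdef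
  have hM0 : (0:ℝ) < M := lt_of_lt_of_le zero_lt_one (le_max_left _ _)
  -- Markov inequality
  have hMp : K0 ≤ M ^ p := by
    calc K0 = (K0 ^ (1/p)) ^ p := by
          rw [← Real.rpow_mul hK0.le, one_div_mul_cancel hp0.ne', Real.rpow_one]
      _ ≤ M ^ p := Real.rpow_le_rpow (Real.rpow_nonneg hK0.le _) (le_max_right _ _) hp0.le
  have hmarkov : (μ {z : X × ℝ≥0 | M < (z.2:ℝ)}).toReal ≤ θ/3 := by
    have h1 : M ^ p * (μ {z : X × ℝ≥0 | M ^ p ≤ (z.2:ℝ) ^ p}).toReal ≤ I :=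
      mul_meas_ge_le_integral_of_nonneg
        (Filter.Eventually.of_forall fun z => Real.rpow_nonneg z.2.coe_nonneg p) hmom (M ^ p)
    have hsub : {z : X × ℝ≥0 | M < (z.2:ℝ)} ⊆ {z : X × ℝ≥0 | M ^ p ≤ (z.2:ℝ) ^ p} :=
      fun z hz => Real.rpow_le_rpow hM0.le (le_of_lt hz) hp0.le
    have h2 : (μ {z : X × ℝ≥0 | M < (z.2:ℝ)}).toReal
        ≤ (μ {z : X × ℝ≥0 | M ^ p ≤ (z.2:ℝ) ^ p}).toReal :=
      ENNReal.toReal_mono (measure_ne_top _ _) (measure_mono hsub)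
    have hMpp : 0 < M ^ p := Real.rpow_pos_of_pos hM0 p
    have h3 : (μ {z : X × ℝ≥0 | M ^ p ≤ (z.2:ℝ) ^ p}).toReal ≤ I / M ^ p := by
      rw [le_div_iff₀ hMpp]; linarith
    have h4 : I / M ^ p ≤ (I + 1) / K0 := by gcongr; linarith
    have h5 : (I + 1) / K0 = θ/3 := by
      rw [hK0def]
      field_simp
    linarith
  -- the compact minimum
  set DX : ℝ := Metric.diam (Set.univ : Set X) with hDX
  have hDX0 : 0 ≤ DX := Metric.diam_nonneg
  set D' : ℝ := max δ DX with hD'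
  set Kc : Set (ℝ × ℝ) := Set.Icc δ D' ×ˢ Set.Icc 0 M with hKc
  have hKcomp : IsCompact Kc := isCompact_Icc.prod isCompact_Icc
  have hKne : Kc.Nonempty := ⟨(δ, 0), by
    constructor
    · exact ⟨le_rfl, le_max_left _ _⟩
    · exact ⟨le_rfl, hM0.le⟩⟩
  set h : ℝ × ℝ → ℝ := fun s => (s.1 ^ q + s.2 ^ q) ^ (p/q) - s.2 ^ p with hhdef
  have hhcont : ContinuousOn h Kc := by
    apply Continuous.continuousOn
    apply Continuous.sub
    · exact (((continuous_fst.rpow_const fun _ => Or.inr hq0.le).add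
        (continuous_snd.rpow_const fun _ => Or.inr hq0.le)).rpow_const
          fun _ => Or.inr (by positivity))
    · exact continuous_snd.rpow_const fun _ => Or.inr hp0.le
  obtain ⟨s₀, hs₀K, hs₀min⟩ := hKcomp.exists_isMinOn hKne hhcont
  set c : ℝ := h s₀ with hcdef
  have hc0 : 0 < c := by
    have h1 : 0 < s₀.1 := lt_of_lt_of_le hδ0 hs₀K.1.1
    have h2 : 0 ≤ s₀.2 := hs₀K.2.1
    exact sub_pos.mpr (aux12_h_pos hq0 hp0 h1 h2)
  -- near-optimal coupling
  obtain ⟨γ, hγ, hfst, hsnd, hcost⟩ :=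
    aux12_exists_coupling hq0 hp0 μ ν heq (mul_pos hc0 (by positivity : (0:ℝ) < θ/3))
  rw [← hIdef] at hcost
  haveI := hγ
  have hae : ∀ᵐ ω ∂γ, ω.2.2 = 0 := aux12_ae_snd_zero hsnd hν
  -- sets
  set E : Set ((X × ℝ≥0) × (X × ℝ≥0)) := {ω | δ ≤ dist ω.1.1 ω.2.1} with hEdef
  have hEm : MeasurableSet E :=
    measurableSet_le measurable_const
      (Continuous.measurable (continuous_fst.fst.dist continuous_snd.fst))
  set F : Set ((X × ℝ≥0) × (X × ℝ≥0)) := {ω | (ω.1.2:ℝ) ≤ M} with hFdef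
  have hFm : MeasurableSet F :=
    measurableSet_le
      (Continuous.measurable (NNReal.continuous_coe.comp continuous_fst.snd)) measurable_const
  have hint_cost := aux12_integrable_cost hq0 hp0 hmom hfst hsnd hν
  have hint_t := aux12_integrable_t1p hp0.le hmom hfst
  -- bound on γ (E ∩ F)
  have hEF : (γ (E ∩ F)).toReal ≤ θ/3 := by
    have hind : ∫ ω, (E ∩ F).indicator (fun _ => c) ω ∂γ
        ≤ ∫ ω, (dq q ω.1 ω.2 ^ p - (ω.1.2:ℝ) ^ p) ∂γ := by
      apply integral_mono_ae ((integrable_const c).indicator (hEm.inter hFm))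
        (hint_cost.sub hint_t)
      filter_upwards [hae] with ω hω
      simp only [Pi.sub_apply]
      have hd2 : dist ω.1.2 ω.2.2 = (ω.1.2:ℝ) := by rw [hω]; simp [NNReal.dist_eq]
      have hcosteq : dq q ω.1 ω.2 ^ p
          = (dist ω.1.1 ω.2.1 ^ q + (ω.1.2:ℝ) ^ q) ^ (p/q) := by
        rw [aux12_cost_eq hq0, hd2]
      by_cases hmem : ω ∈ E ∩ F
      · rw [Set.indicator_of_mem hmem]
        have hmemK : (dist ω.1.1 ω.2.1, (ω.1.2:ℝ)) ∈ Kc := by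
          constructor
          · exact ⟨hmem.1, le_trans (Metric.dist_le_diam_of_mem isCompact_univ.isBounded
              (Set.mem_univ _) (Set.mem_univ _)) (le_max_right _ _)⟩
          · exact ⟨ω.1.2.coe_nonneg, hmem.2⟩
        have := isMinOn_iff.mp hs₀min _ hmemK
        rw [hhdef] at this
        simp only at this
        rw [hcosteq]
        linarith
      · rw [Set.indicator_of_notMem hmem]
        rw [hcosteq]
        have := aux12_h_nonneg hq0 hp0 (dist_nonneg (x := ω.1.1) (y := ω.2.1)) ω.1.2.coe_nonneg
        linarith
    rw [integral_indicator_const c (hEm.inter hFm)] at hind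
    have hsub : ∫ ω, (dq q ω.1 ω.2 ^ p - (ω.1.2:ℝ) ^ p) ∂γ
        = (∫ ω, dq q ω.1 ω.2 ^ p ∂γ) - I := by
      rw [integral_sub hint_cost hint_t, aux12_integral_t1p hp0.le hfst]
    rw [hsub] at hind
    have h6 : c * (γ (E ∩ F)).toReal < c * (θ/3) := by
      have : γ.real (E ∩ F) • c = c * (γ (E ∩ F)).toReal := by
        rw [smul_eq_mul, measureReal_def]; ring
      rw [this] at hind
      exact lt_of_le_of_lt hind (sub_lt_iff_lt_add'.mpr hcost)
    exact le_of_lt ((mul_lt_mul_iff_right₀ hc0).mp h6)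
  -- bound on γ Fᶜ
  have hFc : (γ Fᶜ).toReal ≤ θ/3 := by
    have hpre : Fᶜ = Prod.fst ⁻¹' {z : X × ℝ≥0 | M < (z.2:ℝ)} := by
      ext ω
      simp [hFdef, not_le]
    have hms : MeasurableSet {z : X × ℝ≥0 | M < (z.2:ℝ)} :=
      measurableSet_lt measurable_const
        (show Measurable fun z : X × ℝ≥0 => (z.2:ℝ) from
          (NNReal.continuous_coe.comp continuous_snd).measurable)
    have : γ Fᶜ = μ {z : X × ℝ≥0 | M < (z.2:ℝ)} := by
      rw [hpre, ← Measure.map_apply measurable_fst hms, hfst]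
    rw [this]
    exact hmarkov
  -- bound on γ E
  have hE : (γ E).toReal ≤ θ/3 + θ/3 := by
    have h1 : γ E ≤ γ (E ∩ F) + γ Fᶜ := by
      calc γ E ≤ γ ((E ∩ F) ∪ Fᶜ) := measure_mono (by
            intro ω hω
            by_cases hf : ω ∈ F
            · exact Or.inl ⟨hω, hf⟩
            · exact Or.inr hf)
        _ ≤ γ (E ∩ F) + γ Fᶜ := measure_union_le _ _
    have h2 : (γ E).toReal ≤ (γ (E ∩ F) + γ Fᶜ).toReal :=
      ENNReal.toReal_mono (by finiteness) h1
    rw [ENNReal.toReal_add (measure_ne_top _ _) (measure_ne_top _ _)] at h2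
    linarith
  -- integrals of g
  have hgc : Continuous g := hg.continuous
  have hb2 : ∀ z : X × ℝ≥0, ‖g z‖ ≤ 1 := fun z => by
    rw [Real.norm_eq_abs]
    exact abs_le.mpr ⟨by linarith [(hg01 z).1], (hg01 z).2⟩
  have hintg2 : Integrable (fun ω : (X × ℝ≥0) × (X × ℝ≥0) => g ω.2) γ :=
    Integrable.mono' (integrable_const 1) (hgc.comp continuous_snd).aestronglyMeasurable
      (Filter.Eventually.of_forall fun ω => hb2 ω.2)
  have hintg1 : Integrable (fun ω : (X × ℝ≥0) × (X × ℝ≥0) => g (ω.1.1, 0)) γ :=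
    Integrable.mono' (integrable_const 1)
      (hgc.comp ((continuous_fst.fst).prodMk continuous_const)).aestronglyMeasurable
      (Filter.Eventually.of_forall fun ω => hb2 _)
  have hiν : ∫ z, g z ∂ν = ∫ ω, g ω.2 ∂γ := by
    rw [← hsnd, integral_map measurable_snd.aemeasurable hgc.aestronglyMeasurable]
  have hm1 : AEStronglyMeasurable (fun z : X × ℝ≥0 => g (z.1, (0:ℝ≥0)))
      (Measure.map Prod.fst γ) :=
    (hgc.comp (continuous_fst.prodMk continuous_const)).aestronglyMeasurable
  have hiν₀ : ∫ z, g z ∂ν₀ = ∫ ω, g (ω.1.1, 0) ∂γ := by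
    rw [hν₀, integral_map aux12_meas_T.aemeasurable hgc.aestronglyMeasurable, ← hfst,
      integral_map measurable_fst.aemeasurable hm1]
  -- pointwise bound
  have hptbd : ∫ ω, |g ω.2 - g (ω.1.1, 0)| ∂γ
      ≤ ∫ ω, ((L:ℝ) * δ + E.indicator (fun _ => (1:ℝ)) ω) ∂γ := by
    apply integral_mono_ae (hintg2.sub hintg1).abs
      ((integrable_const _).add ((integrable_const 1).indicator hEm))
    filter_upwards [hae] with ω hω
    simp only [Pi.sub_apply, Pi.add_apply]
    have hω2 : ω.2 = (ω.2.1, (0:ℝ≥0)) := by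
      rw [← hω]
    by_cases hmem : ω ∈ E
    · rw [Set.indicator_of_mem hmem]
      have : |g ω.2 - g (ω.1.1, 0)| ≤ 1 := by
        have b1 := hg01 ω.2
        have b2 := hg01 (ω.1.1, 0)
        rw [Set.mem_Icc] at b1 b2
        apply abs_le.mpr ⟨by linarith, by linarith⟩
      have : (0:ℝ) ≤ (L:ℝ) * δ := by positivity
      linarith [abs_le.mpr (⟨by linarith [(hg01 ω.2).1, (hg01 (ω.1.1, 0)).2],
        by linarith [(hg01 ω.2).2, (hg01 (ω.1.1, 0)).1]⟩ :
          -(1:ℝ) ≤ g ω.2 - g (ω.1.1, 0) ∧ g ω.2 - g (ω.1.1, 0) ≤ 1)]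
    · rw [Set.indicator_of_notMem hmem, add_zero]
      have hdlt : dist ω.1.1 ω.2.1 < δ := not_le.mp hmem
      have hlip := hg.dist_le_mul ω.2 (ω.1.1, 0)
      rw [Real.dist_eq] at hlip
      have hdd : dist ω.2 (ω.1.1, (0:ℝ≥0)) = dist ω.2.1 ω.1.1 := by
        rw [hω2, Prod.dist_eq]
        simp [dist_nonneg]
      rw [hdd] at hlip
      calc |g ω.2 - g (ω.1.1, 0)| ≤ (L:ℝ) * dist ω.2.1 ω.1.1 := hlip
        _ ≤ (L:ℝ) * δ := by
            apply mul_le_mul_of_nonneg_left _ hL0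
            rw [dist_comm]
            exact hdlt.le
  have hrhs : ∫ ω, ((L:ℝ) * δ + E.indicator (fun _ => (1:ℝ)) ω) ∂γ
      = (L:ℝ) * δ + (γ E).toReal := by
    rw [integral_add (integrable_const _) ((integrable_const 1).indicator hEm),
      integral_const, integral_indicator_const (1:ℝ) hEm]
    simp [measureReal_def, measure_univ]
  have hLδ : (L:ℝ) * δ ≤ θ/3 := by
    rw [hδdef]
    have h1 : (L:ℝ) * (θ / (3*((L:ℝ)+1))) = (L:ℝ)*θ / (3*((L:ℝ)+1)) := by ring
    rw [h1, div_le_div_iff₀ (by positivity) (by norm_num)]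
    nlinarith
  -- final
  have hfinal : |∫ z, g z ∂ν - ∫ z, g z ∂ν₀| ≤ (L:ℝ) * δ + (γ E).toReal := by
    rw [hiν, hiν₀, ← integral_sub hintg2 hintg1]
    calc |∫ ω, (g ω.2 - g (ω.1.1, 0)) ∂γ| ≤ ∫ ω, |g ω.2 - g (ω.1.1, 0)| ∂γ := by
          simpa [Real.norm_eq_abs] using
            norm_integral_le_integral_norm (fun ω : (X × ℝ≥0) × (X × ℝ≥0) =>
              g ω.2 - g (ω.1.1, 0)) (μ := γ)
      _ ≤ _ := le_of_le_of_eq hptbd hrhs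
  linarith
end F
section G
variable {X : Type*} [MetricSpace X] [CompactSpace X] [MeasurableSpace X] [BorelSpace X]
  {q p : ℝ}

lemma aux12_closed_eq (hq : 1 < q) (hp : 1 ≤ p) (μ ν : Measure (X × ℝ≥0))
    [IsProbabilityMeasure μ] [IsProbabilityMeasure ν]
    (hmom : Integrable (fun z : X × ℝ≥0 => (z.2 : ℝ) ^ p) μ)
    (hν : ν {z : X × ℝ≥0 | z.2 ≠ 0} = 0)
    (heq : Wp (dq q) p μ ν = (∫ z, (z.2 : ℝ) ^ p ∂μ) ^ (1/p))
    (Fc : Set (X × ℝ≥0)) (hcl : IsClosed Fc) :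
    ν Fc = (μ.map (fun z : X × ℝ≥0 => (z.1, (0:ℝ≥0)))) Fc := by
  set ν₀ : Measure (X × ℝ≥0) := μ.map (fun z : X × ℝ≥0 => (z.1, (0:ℝ≥0))) with hν₀
  haveI : IsProbabilityMeasure ν₀ := Measure.isProbabilityMeasure_map aux12_meas_T.aemeasurable
  rcases Fc.eq_empty_or_nonempty with rfl | hne
  · simp
  set gs : ℕ → (X × ℝ≥0) → ℝ :=
    fun n z => max (1 - (n:ℝ) * Metric.infDist z Fc) 0 with hgs
  have hlip : ∀ n : ℕ, LipschitzWith (n : ℝ≥0) (gs n) := by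
    intro n
    apply LipschitzWith.of_dist_le_mul
    intro x y
    rw [Real.dist_eq]
    calc |gs n x - gs n y|
        ≤ |(1 - (n:ℝ) * Metric.infDist x Fc) - (1 - (n:ℝ) * Metric.infDist y Fc)| :=
          abs_max_sub_max_le_abs _ _ _
      _ = |(n:ℝ) * (Metric.infDist y Fc - Metric.infDist x Fc)| := by
          congr 1
          ring
      _ = (n:ℝ) * |Metric.infDist y Fc - Metric.infDist x Fc| := by
          rw [abs_mul, Nat.abs_cast]
      _ ≤ (n:ℝ) * dist x y := by
          apply mul_le_mul_of_nonneg_left _ (by positivity)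
          rw [abs_sub_comm]
          have := (Metric.lipschitz_infDist_pt Fc).dist_le_mul x y
          rwa [Real.dist_eq, NNReal.coe_one, one_mul] at this
      _ = ((n : ℝ≥0) : ℝ) * dist x y := by norm_num
  have h01 : ∀ n z, gs n z ∈ Set.Icc (0:ℝ) 1 := by
    intro n z
    constructor
    · exact le_max_right _ _
    · apply max_le _ zero_le_one
      have : 0 ≤ (n:ℝ) * Metric.infDist z Fc :=
        mul_nonneg (Nat.cast_nonneg n) Metric.infDist_nonneg
      linarith
  have hInt : ∀ n, ∫ z, gs n z ∂ν = ∫ z, gs n z ∂ν₀ := fun n =>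
    aux12_key hq hp μ ν hmom hν heq (n : ℝ≥0) (gs n) (hlip n) (h01 n)
  have hgcont : ∀ n, Continuous (gs n) := fun n =>
    ((continuous_const.sub (continuous_const.mul
      (Metric.continuous_infDist_pt Fc))).max continuous_const)
  have htend : ∀ z, Filter.Tendsto (fun n => gs n z) Filter.atTop
      (nhds (Fc.indicator (fun _ => (1:ℝ)) z)) := by
    intro z
    by_cases hz : z ∈ Fc
    · rw [Set.indicator_of_mem hz]
      have hconst : ∀ n : ℕ, gs n z = 1 := by
        intro n
        rw [hgs]
        simp [Metric.infDist_zero_of_mem hz]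
      have : (fun n : ℕ => gs n z) = fun _ : ℕ => (1:ℝ) := funext hconst
      rw [this]
      exact tendsto_const_nhds
    · rw [Set.indicator_of_notMem hz]
      have hd : 0 < Metric.infDist z Fc := (hcl.notMem_iff_infDist_pos hne).mp hz
      have hev : ∀ᶠ n : ℕ in Filter.atTop, gs n z = 0 := by
        rw [Filter.eventually_atTop]
        refine ⟨⌈1 / Metric.infDist z Fc⌉₊, fun n hn => ?_⟩
        apply max_eq_right
        have h1 : 1 / Metric.infDist z Fc ≤ (n:ℝ) :=
          le_trans (Nat.le_ceil _) (by exact_mod_cast hn)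
        have h2 : 1 ≤ (n:ℝ) * Metric.infDist z Fc := by
          rw [div_le_iff₀ hd] at h1
          linarith
        linarith
      exact Filter.Tendsto.congr' (hev.mono fun n h => h.symm) tendsto_const_nhds
  have hdom : ∀ (ρ : Measure (X × ℝ≥0)), IsProbabilityMeasure ρ →
      Filter.Tendsto (fun n => ∫ z, gs n z ∂ρ) Filter.atTop
        (nhds (∫ z, Fc.indicator (fun _ => (1:ℝ)) z ∂ρ)) := by
    intro ρ hρ
    apply tendsto_integral_of_dominated_convergence (fun _ => (1:ℝ))
      (fun n => (hgcont n).aestronglyMeasurable) (integrable_const 1)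
    · intro n
      apply Filter.Eventually.of_forall
      intro z
      rw [Real.norm_eq_abs]
      exact abs_le.mpr ⟨by linarith [(h01 n z).1], (h01 n z).2⟩
    · exact Filter.Eventually.of_forall htend
  have h1 := hdom ν inferInstance
  have h2 := hdom ν₀ inferInstance
  have h3 : Filter.Tendsto (fun n => ∫ z, gs n z ∂ν) Filter.atTop
      (nhds (∫ z, Fc.indicator (fun _ => (1:ℝ)) z ∂ν₀)) := by
    apply h2.congr
    intro n
    exact (hInt n).symm
  have h4 : ∫ z, Fc.indicator (fun _ => (1:ℝ)) z ∂ν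
      = ∫ z, Fc.indicator (fun _ => (1:ℝ)) z ∂ν₀ := tendsto_nhds_unique h1 h3
  have h5 : (ν Fc).toReal = (ν₀ Fc).toReal := by
    have e1 : ∫ z, Fc.indicator (fun _ => (1:ℝ)) z ∂ν = (ν Fc).toReal := by
      rw [integral_indicator_const (1:ℝ) hcl.measurableSet]
      simp [measureReal_def]
    have e2 : ∫ z, Fc.indicator (fun _ => (1:ℝ)) z ∂ν₀ = (ν₀ Fc).toReal := by
      rw [integral_indicator_const (1:ℝ) hcl.measurableSet]
      simp [measureReal_def]
    rw [← e1, ← e2, h4]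
  exact (ENNReal.toReal_eq_toReal_iff' (measure_ne_top _ _) (measure_ne_top _ _)).mp h5

lemma aux12_ext (ν ν₀ : Measure (X × ℝ≥0)) [IsProbabilityMeasure ν] [IsProbabilityMeasure ν₀]
    (h : ∀ F : Set (X × ℝ≥0), IsClosed F → ν F = ν₀ F) : ν = ν₀ := by
  apply ext_of_generate_finite {s : Set (X × ℝ≥0) | IsClosed s}
    (BorelSpace.measurable_eq.trans borel_eq_generateFrom_isClosed)
    (fun s hs t ht _ => hs.inter ht) h
  rw [measure_univ, measure_univ]
end G

/-- On the half-cylinder `X ×_q [0,∞)`, for `μ ∈ P_p` and any probability measure `ν'`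
supported on the base `X × {0}`, one has `W_p(μ, ν') ≥ W_p(μ, (T₀)_#μ)` where
`T₀(x,t) = (x,0)`, with equality only if `ν' = (T₀)_#μ`. -/
theorem stmt_12 {X : Type*} [MetricSpace X] [CompactSpace X]
    [MeasurableSpace X] [BorelSpace X]
    (q p : ℝ) (hq : 1 < q) (hp : 1 ≤ p)
    (μ : Measure (X × ℝ≥0)) [IsProbabilityMeasure μ]
    (hmom : Integrable (fun z : X × ℝ≥0 => (z.2 : ℝ) ^ p) μ)
    (ν' : Measure (X × ℝ≥0)) [IsProbabilityMeasure ν']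
    (hν' : ν' {z : X × ℝ≥0 | z.2 ≠ 0} = 0) :
    Wp (dq q) p μ (μ.map (fun z : X × ℝ≥0 => (z.1, (0 : ℝ≥0)))) ≤ Wp (dq q) p μ ν' ∧
    (Wp (dq q) p μ ν' = Wp (dq q) p μ (μ.map (fun z : X × ℝ≥0 => (z.1, (0 : ℝ≥0)))) →
      ν' = μ.map (fun z : X × ℝ≥0 => (z.1, (0 : ℝ≥0)))) := by
  have hq0 : 0 < q := lt_trans zero_lt_one hq
  have hp0 : 0 < p := lt_of_lt_of_le zero_lt_one hp
  haveI : IsProbabilityMeasure (μ.map (fun z : X × ℝ≥0 => (z.1, (0:ℝ≥0)))) :=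
    Measure.isProbabilityMeasure_map aux12_meas_T.aemeasurable
  constructor
  · rw [aux12_Wp_eq hq0 hp0 μ hmom]
    exact aux12_Wp_ge_of_base hq0 hp0 μ ν' hmom hν'
  · intro heq'
    have heq2 : Wp (dq q) p μ ν' = (∫ z, (z.2 : ℝ) ^ p ∂μ) ^ (1/p) :=
      heq'.trans (aux12_Wp_eq hq0 hp0 μ hmom)
    exact aux12_ext ν' _ (fun F hF => aux12_closed_eq hq hp μ ν' hmom hν' heq2 F hF)
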